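/- Let Y be a linear subspace of a topological vector space X and let A ⊆ X be an open convex set intersecting Y. Then closure(A ∩ Y) = closure(A) ∩ closure(Y). -/

import Mathlib

theorem stmt_1 {X : Type*} [AddCommGroup X] [Module ℝ X] [TopologicalSpace X]
    [IsTopologicalAddGroup X] [ContinuousSMul ℝ X]
    (Y : Submodule ℝ X) (A : Set X) (hAopen : IsOpen A) (hAconv : Convex ℝ A)
    (hne : (A ∩ (Y : Set X)).Nonempty) :
    closure (A ∩ (Y : Set X)) = closure A ∩ closure (Y : Set X) := by
  apply subset_antisymm
  · exact Set.subset_inter (closure_mono Set.inter_subset_left)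
      (closure_mono Set.inter_subset_right)
  · rintro x ⟨hxA, hxY⟩
    obtain ⟨a, haA, haY⟩ := hne
    rw [mem_closure_iff]
    intro U hU hxU
    -- open segment from a to x lies in A
    have hseg : openSegment ℝ a x ⊆ A := by
      have := hAconv.openSegment_interior_closure_subset_interior
        (by rwa [hAopen.interior_eq]) hxA
      exact this.trans interior_subset
    -- the curve t ↦ (1-t)•a + t•x is continuous and hits U near t = 1
    have hg : Continuous (fun t : ℝ => (1 - t) • a + t • x) := by
      continuity
    have h1 : (1 : ℝ) ∈ closure (Set.Ioo (0:ℝ) 1) := by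
      rw [closure_Ioo one_ne_zero.symm]
      exact Set.right_mem_Icc.2 zero_le_one
    obtain ⟨t, htU, ht0, ht1⟩ :=
      mem_closure_iff.1 h1 _ (hU.preimage hg) (by simpa using hxU)
    -- z t ∈ A
    have hzA : (1 - t) • a + t • x ∈ A :=
      hseg ⟨1 - t, t, by linarith, ht0, by ring, rfl⟩
    -- f v = (1-t)•a + t•v
    have hf : Continuous (fun v : X => (1 - t) • a + t • v) :=
      continuous_const.add (continuous_id.const_smul t)
    have hV : IsOpen ((fun v : X => (1 - t) • a + t • v) ⁻¹' (A ∩ U)) :=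
      (hAopen.inter hU).preimage hf
    have hxV : x ∈ (fun v : X => (1 - t) • a + t • v) ⁻¹' (A ∩ U) := ⟨hzA, htU⟩
    obtain ⟨y, ⟨hyA, hyU⟩, hyY⟩ := mem_closure_iff.1 hxY _ hV hxV
    exact ⟨(1 - t) • a + t • y, hyU, hyA,
      Y.add_mem (Y.smul_mem _ haY) (Y.smul_mem _ hyY)⟩
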